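/- A finite matroid M is binary if and only if its dual matroid M✶ is binary. -/

import Mathlib

/-- `ρ` is a representation of the matroid `M` over the field `K`. -/
def Matroid.IsRep {α : Type*} (M : Matroid α) (K : Type*) [Field K] {V : Type*}
    [AddCommGroup V] [Module K V] (ρ : α → V) : Prop :=
  (∀ S ⊆ M.E, (M.Indep S ↔ Set.InjOn ρ S ∧ LinearIndependent K ((↑) : (ρ '' S) → V))) ∧
    Submodule.span K (ρ '' M.E) = ⊤

/-- `M` is representable over the field `K`. -/
def Matroid.RepresentableOver {α : Type*} (M : Matroid α) (K : Type) [Field K] : Prop :=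
  ∃ (V : Type) (_ : AddCommGroup V) (_ : Module K V) (ρ : α → V), M.IsRep K ρ

/-- A matroid is binary if it admits a representation over `𝔽₂ = ZMod 2`. -/
def Matroid.IsBinary {α : Type*} (M : Matroid α) : Prop :=
  M.RepresentableOver (ZMod 2)

open Set Submodule

/-- The `i`-th standard basis vector of `Fin n → K`. -/
def stdb (K : Type*) [Semiring K] {n : ℕ} (i : Fin n) : Fin n → K :=
  Pi.single i 1

lemma stdb_apply (K : Type*) [Semiring K] {n : ℕ} (i j : Fin n) :
    stdb K i j = if j = i then 1 else 0 := by
  simp [stdb, Pi.single_apply]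

section Helpers

variable {K : Type*} [Field K] {V : Type*} [AddCommGroup V] [Module K V]

lemma injOn_and_image_li_iff {ι : Type*} (f : ι → V) (S : Set ι) :
    (Set.InjOn f S ∧ LinearIndependent K ((↑) : (f '' S) → V)) ↔
      LinearIndependent K (fun x : S => f x) := by
  constructor
  · rintro ⟨hinj, hli⟩
    exact (linearIndepOn_iff_image hinj).mpr hli
  · intro h
    have hinj : Set.InjOn f S := fun a ha b hb hab =>
      congrArg Subtype.val (h.injective (a₁ := ⟨a, ha⟩) (a₂ := ⟨b, hb⟩) hab)
    exact ⟨hinj, (linearIndepOn_iff_image hinj).mp h⟩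

variable {α : Type*} {M : Matroid α} {ρ : α → V}

lemma indep_insert_of_not_mem_span (hρ : M.IsRep K ρ) {I : Set α} {e : α}
    (hI : M.Indep I) (heE : e ∈ M.E) (heI : e ∉ I)
    (hsp : ρ e ∉ Submodule.span K (ρ '' I)) : M.Indep (insert e I) := by
  obtain ⟨hinj, hli⟩ := (hρ.1 I hI.subset_ground).1 hI
  have him : ρ e ∉ ρ '' I := fun h => hsp (subset_span h)
  refine (hρ.1 (insert e I) (insert_subset heE hI.subset_ground)).2
    ⟨(Set.injOn_insert heI).2 ⟨hinj, him⟩, ?_⟩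
  rw [Set.image_insert_eq]
  exact LinearIndepOn.id_insert (s := ρ '' I) (x := ρ e) hli hsp

lemma spanning_iff_span (hρ : M.IsRep K ρ) {X : Set α} (hX : X ⊆ M.E) :
    M.Spanning X ↔ Submodule.span K (ρ '' X) = ⊤ := by
  constructor
  · intro hXs
    obtain ⟨B, hB, hBX⟩ := (Matroid.spanning_iff_exists_isBase_subset'.1 hXs).1
    have hBtop : Submodule.span K (ρ '' B) = ⊤ := by
      rw [eq_top_iff, ← hρ.2]
      refine span_le.2 ?_
      rintro _ ⟨e, heE, rfl⟩
      by_cases heB : e ∈ B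
      · exact subset_span ⟨e, heB, rfl⟩
      · by_contra hsp
        exact (hB.insert_dep ⟨heE, heB⟩).not_indep
          (indep_insert_of_not_mem_span hρ hB.indep heE heB hsp)
    exact top_unique (hBtop ▸ span_mono (Set.image_mono (f := ρ) hBX))
  · intro hsp
    obtain ⟨I, hI⟩ := M.exists_isBasis X hX
    have hItop : Submodule.span K (ρ '' I) = ⊤ := by
      rw [eq_top_iff, ← hsp]
      refine span_le.2 ?_
      rintro _ ⟨e, heX, rfl⟩
      by_cases heI : e ∈ I
      · exact subset_span ⟨e, heI, rfl⟩
      · by_contra hmem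
        exact (hI.insert_dep ⟨heX, heI⟩).not_indep
          (indep_insert_of_not_mem_span hρ hI.indep (hX heX) heI hmem)
    have hIbase : M.IsBase I := by
      refine hI.indep.isBase_of_forall_insert fun e he hins => ?_
      obtain ⟨hinj, hli⟩ := (hρ.1 _ hins.subset_ground).1 hins
      have him : ρ e ∉ ρ '' I := ((Set.injOn_insert he.2).1 hinj).2
      rw [Set.image_insert_eq] at hli
      exact ((linearIndepOn_id_insert him).1 hli).2 (hItop ▸ mem_top)
    exact hIbase.spanning_of_superset hI.subset hX

lemma sum_stdb_apply {n : ℕ} (T : Set (Fin n)) [Fintype T] [DecidablePred (· ∈ T)]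
    (g : T → K) (j : Fin n) :
    (∑ t : T, g t • stdb K (t : Fin n)) j = if h : j ∈ T then g ⟨j, h⟩ else 0 := by
  rw [Finset.sum_apply]
  by_cases h : j ∈ T
  · rw [dif_pos h, Finset.sum_eq_single (⟨j, h⟩ : T)]
    · simp [stdb_apply]
    · intro t _ ht
      have hne : j ≠ (t : Fin n) := fun e => ht (Subtype.ext e.symm)
      simp [stdb_apply, hne]
    · simp
  · rw [dif_neg h]
    refine Finset.sum_eq_zero fun t _ => ?_
    have hne : j ≠ (t : Fin n) := fun e => h (e ▸ t.2)
    simp [stdb_apply, hne]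

lemma span_stdb_top {n : ℕ} :
    Submodule.span K (Set.range fun i : Fin n => stdb K i) = ⊤ := by
  classical
  rw [eq_top_iff]
  rintro f -
  have hf : f = ∑ i : Fin n, f i • stdb K i := by
    funext j
    rw [Finset.sum_apply]
    simp [stdb_apply]
  rw [hf]
  exact sum_mem fun i _ => smul_mem _ _ (subset_span ⟨i, rfl⟩)

lemma key_li_iff {n : ℕ} (v : Fin n → V)
    (hv : Submodule.span K (Set.range v) = ⊤)
    (W : Submodule K (Fin n → K))
    (hW : ∀ f, f ∈ W ↔ ∃ φ : Module.Dual K V, ∀ i, φ (v i) = f i)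
    (T : Set (Fin n)) :
    LinearIndependent K (fun i : T => W.mkQ (stdb K (i : Fin n))) ↔
      Submodule.span K (v '' Tᶜ) = ⊤ := by
  classical
  haveI : Fintype T := Fintype.ofFinite T
  constructor
  · intro hli
    rw [eq_top_iff, ← hv, span_le]
    rintro _ ⟨i, rfl⟩
    refine (Subspace.forall_mem_dualAnnihilator_apply_eq_zero_iff _ _).1 fun φ hφ => ?_
    have hvan : ∀ j : Fin n, j ∉ T → φ (v j) = 0 := fun j hj =>
      (Submodule.mem_dualAnnihilator _).1 hφ _ (subset_span ⟨j, hj, rfl⟩)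
    set g : T → K := fun t => φ (v t) with hg
    have hsum : (∑ t : T, g t • stdb K (t : Fin n)) = fun i => φ (v i) := by
      funext j
      rw [sum_stdb_apply]
      by_cases h : j ∈ T
      · rw [dif_pos h]
      · rw [dif_neg h, hvan j h]
    have h0 : ∑ t : T, g t • W.mkQ (stdb K (t : Fin n)) = 0 := by
      have hmap : ∑ t : T, g t • W.mkQ (stdb K (t : Fin n))
          = W.mkQ (∑ t : T, g t • stdb K (t : Fin n)) := by
        rw [map_sum]
        exact Finset.sum_congr rfl fun t _ => (map_smul _ _ _).symm
      rw [hmap, hsum, Submodule.mkQ_apply, Submodule.Quotient.mk_eq_zero]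
      exact (hW _).2 ⟨φ, fun i => rfl⟩
    have hz := Fintype.linearIndependent_iff.1 hli g h0
    by_cases h : i ∈ T
    · exact hz ⟨i, h⟩
    · exact hvan i h
  · intro hsp
    rw [Fintype.linearIndependent_iff]
    intro g hg
    have h0 : (∑ t : T, g t • stdb K (t : Fin n)) ∈ W := by
      rw [← Submodule.Quotient.mk_eq_zero, ← Submodule.mkQ_apply, map_sum]
      have hmap : ∀ t : T, W.mkQ (g t • stdb K (t : Fin n))
          = g t • W.mkQ (stdb K (t : Fin n)) := fun t => map_smul _ _ _
      simp only [hmap]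
      exact hg
    obtain ⟨φ, hφ⟩ := (hW _).1 h0
    have hφ0 : φ = 0 := by
      have hker : Submodule.span K (v '' Tᶜ) ≤ LinearMap.ker φ := by
        refine span_le.2 ?_
        rintro _ ⟨j, hj, rfl⟩
        rw [SetLike.mem_coe, LinearMap.mem_ker, hφ j, sum_stdb_apply, dif_neg hj]
      rw [hsp] at hker
      exact LinearMap.ext fun x => hker trivial
    intro t
    have ht := hφ t
    rw [hφ0, sum_stdb_apply, dif_pos t.2] at ht
    simpa using ht.symm

end Helpers

theorem representableOver_dual {α : Type*} {M : Matroid α} [M.Finite] {K : Type} [Field K]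
    (h : M.RepresentableOver K) : M✶.RepresentableOver K := by
  classical
  obtain ⟨V, _, _, ρ, hρ⟩ := h
  have hE : M.E.Finite := M.ground_finite
  haveI : Fintype M.E := hE.fintype
  set n := Fintype.card M.E with hn
  let eqv : M.E ≃ Fin n := Fintype.equivFin M.E
  let v : Fin n → V := fun i => ρ (eqv.symm i)
  have hvrange : Set.range v = ρ '' M.E := by
    ext x
    constructor
    · rintro ⟨i, rfl⟩
      exact ⟨eqv.symm i, (eqv.symm i).2, rfl⟩
    · rintro ⟨a, ha, rfl⟩
      exact ⟨eqv ⟨a, ha⟩, by simp [v]⟩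
  have hv : Submodule.span K (Set.range v) = ⊤ := by rw [hvrange]; exact hρ.2
  let L : Module.Dual K V →ₗ[K] (Fin n → K) :=
    { toFun := fun φ i => φ (v i)
      map_add' := fun φ ψ => rfl
      map_smul' := fun c φ => rfl }
  set W := LinearMap.range L with hWdef
  have hW : ∀ f, f ∈ W ↔ ∃ φ : Module.Dual K V, ∀ i, φ (v i) = f i := by
    intro f
    constructor
    · rintro ⟨φ, rfl⟩
      exact ⟨φ, fun i => rfl⟩
    · rintro ⟨φ, hφ⟩
      exact ⟨φ, funext hφ⟩
  let ρd : α → ((Fin n → K) ⧸ W) := fun a =>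
    if h : a ∈ M.E then W.mkQ (stdb K (eqv ⟨a, h⟩)) else 0
  refine ⟨(Fin n → K) ⧸ W, inferInstance, inferInstance, ρd, ?_, ?_⟩
  · intro S hS
    rw [Matroid.dual_ground] at hS
    rw [show M✶.Indep S ↔ M.Coindep S from Iff.rfl,
      Matroid.coindep_iff_compl_spanning hS, spanning_iff_span hρ diff_subset,
      injOn_and_image_li_iff]
    set T : Set (Fin n) := {i | (eqv.symm i : α) ∈ S} with hT
    have hTc : v '' Tᶜ = ρ '' (M.E \ S) := by
      ext x
      constructor
      · rintro ⟨i, hi, rfl⟩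
        exact ⟨eqv.symm i, ⟨(eqv.symm i).2, hi⟩, rfl⟩
      · rintro ⟨a, ⟨haE, haS⟩, rfl⟩
        refine ⟨eqv ⟨a, haE⟩, ?_, by simp [v]⟩
        simpa [hT] using haS
    let ψ : S ≃ T :=
      { toFun := fun e => ⟨eqv ⟨(e : α), hS e.2⟩, by simp [hT]⟩
        invFun := fun i => ⟨(eqv.symm (i : Fin n) : α), i.2⟩
        left_inv := fun e => by
          apply Subtype.ext
          simp
        right_inv := fun i => by
          apply Subtype.ext
          simp }
    have hfam : (fun i : T => W.mkQ (stdb K (i : Fin n))) ∘ ψ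
        = fun e : S => ρd e := by
      funext e
      simp only [Function.comp_apply, ρd, dif_pos (hS e.2)]
      rfl
    rw [← hfam, linearIndependent_equiv ψ, key_li_iff v hv W hW T, hTc]
  · rw [Matroid.dual_ground, eq_top_iff]
    have him : Set.range (fun i : Fin n => W.mkQ (stdb K i)) ⊆ ρd '' M.E := by
      rintro _ ⟨i, rfl⟩
      refine ⟨(eqv.symm i : α), (eqv.symm i).2, ?_⟩
      simp only [ρd, dif_pos (eqv.symm i).2]
      congr 1
      simp
    have htop : Submodule.span K (Set.range fun i : Fin n => W.mkQ (stdb K i)) = ⊤ := by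
      have hrc : (Set.range fun i : Fin n => W.mkQ (stdb K i))
          = W.mkQ '' (Set.range fun i : Fin n => stdb K i) := by
        rw [← Set.range_comp]; rfl
      rw [hrc, Submodule.span_image, span_stdb_top, Submodule.map_top, Submodule.range_mkQ]
    exact htop ▸ span_mono him

/-- A finite matroid is binary if and only if its dual matroid is binary. -/
theorem binary_iff_dual_binary {α : Type*} (M : Matroid α) [M.Finite] :
    M.IsBinary ↔ M✶.IsBinary := by
  constructor
  · exact fun h => representableOver_dual h
  · intro h
    have h2 := representableOver_dual (M := M✶) h
    rwa [Matroid.dual_dual] at h2
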